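/- Let 1 ≤ s ≤ p and m ≥ s be natural numbers, and let x : Fin m → ℝ^p be any m points in ℝ^p. Then the number of distinct Boolean vectors (1(⟨w, x₁⟩ ≥ 0), …, 1(⟨w, x_m⟩ ≥ 0)) realized as w ranges over the s-sparse vectors {w ∈ ℝ^p : ‖w‖₀ ≤ s} is at most C(p, s)·(e·m/s)^s, and hence at most (e·p·m/s)^s. -/

import Mathlib

open scoped BigOperators

/-- The set of dichotomies induced on the points `x` by homogeneous halfspaces with
normal vectors ranging over `W`. -/
def dichotomies {p m : ℕ} (W : Set (Fin p → ℝ)) (x : Fin m → (Fin p → ℝ)) :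
    Set (Fin m → Bool) :=
  {b | ∃ w ∈ W, ∀ i, b i = decide (0 ≤ ∑ k, w k * x i k)}

lemma sum_choose_le_expBound (s m : ℕ) (hs : 1 ≤ s) (hm : s ≤ m) :
    ((∑ k ∈ Finset.Iic s, m.choose k : ℕ) : ℝ) ≤ (Real.exp 1 * m / s) ^ s := by
  have hm1 : 1 ≤ m := hs.trans hm
  have hmR : (0:ℝ) < m := by exact_mod_cast hm1
  have hsR : (0:ℝ) < s := by exact_mod_cast hs
  set t : ℝ := (s:ℝ) / m with ht
  have ht0 : 0 < t := div_pos hsR hmR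
  have ht1 : t ≤ 1 := by
    rw [ht, div_le_one hmR]; exact_mod_cast hm
  have key : ((∑ k ∈ Finset.Iic s, m.choose k : ℕ) : ℝ) * t ^ s ≤ (t + 1) ^ m := by
    have h1 : ((∑ k ∈ Finset.Iic s, m.choose k : ℕ) : ℝ) * t ^ s
        = ∑ k ∈ Finset.Iic s, (m.choose k : ℝ) * t ^ s := by
      push_cast; rw [Finset.sum_mul]
    rw [h1, add_pow]
    have h2 : ∀ k ∈ Finset.Iic s, (m.choose k : ℝ) * t ^ s ≤ t ^ k * 1 ^ (m - k) * m.choose k := by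
      intro k hk
      rw [one_pow, mul_one, mul_comm]
      exact mul_le_mul_of_nonneg_right
        (pow_le_pow_of_le_one ht0.le ht1 (Finset.mem_Iic.1 hk)) (Nat.cast_nonneg _)
    refine (Finset.sum_le_sum h2).trans ?_
    refine Finset.sum_le_sum_of_subset_of_nonneg ?_ ?_
    · intro k hk
      simp only [Finset.mem_Iic, Finset.mem_range] at *
      omega
    · intro k _ _
      positivity
  have h3 : (t + 1) ^ m ≤ Real.exp 1 ^ s := by
    have : (t + 1) ^ m ≤ Real.exp t ^ m := by
      apply pow_le_pow_left₀ (by positivity)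
      linarith [Real.add_one_le_exp t]
    refine this.trans ?_
    rw [← Real.exp_nat_mul]
    have : (m : ℝ) * t = s := by rw [ht]; field_simp
    rw [this, ← Real.exp_nat_mul, mul_one]
  have h4 : ((∑ k ∈ Finset.Iic s, m.choose k : ℕ) : ℝ) ≤ Real.exp 1 ^ s / t ^ s := by
    rw [le_div_iff₀ (by positivity)]
    exact key.trans h3
  refine h4.trans_eq ?_
  rw [← div_pow]
  congr 1
  rw [ht]
  field_simp

lemma no_shatter {p m s : ℕ} (x : Fin m → (Fin p → ℝ)) (S : Finset (Fin p))
    (hS : S.card = s) (𝒜 : Finset (Finset (Fin m)))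
    (h𝒜 : ∀ u ∈ 𝒜, ∃ w : Fin p → ℝ, (∀ k ∉ S, w k = 0) ∧
      ∀ i, (i ∈ u ↔ 0 ≤ ∑ k, w k * x i k))
    (T : Finset (Fin m)) (hT : 𝒜.Shatters T) : T.card ≤ s := by
  by_contra hlt
  push_neg at hlt
  obtain ⟨T', hT'sub, hT'card⟩ := Finset.exists_subset_card_eq (show s + 1 ≤ T.card by omega)
  have hshat : 𝒜.Shatters T' := hT.mono_right hT'sub
  set v : T' → (S → ℝ) := fun i k => x i k with hv
  have hnli : ¬ LinearIndependent ℝ v := by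
    intro hli
    have := hli.fintype_card_le_finrank
    simp only [Module.finrank_pi, Fintype.card_coe, hS, hT'card] at this
    omega
  rw [Fintype.not_linearIndependent_iff] at hnli
  obtain ⟨g0, hgsum0, i₀0, hi₀0⟩ := hnli
  have main : ∀ g : T' → ℝ, (∑ i, g i • v i = 0) → (∃ i, 0 < g i) → False := by
    rintro g hgsum ⟨i₀, hi₀⟩
    classical
    set a : Fin m → ℝ := fun i => if h : i ∈ T' then g ⟨i, h⟩ else 0 with ha
    obtain ⟨u, hu𝒜, huT⟩ := hshat (Finset.filter_subset (fun i => a i ≤ 0) T')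
    obtain ⟨w, hwsupp, hw⟩ := h𝒜 u hu𝒜
    have hmem : ∀ i ∈ T', (0 ≤ ∑ k, w k * x i k ↔ a i ≤ 0) := by
      intro i h
      rw [← hw i]
      constructor
      · intro hiu
        have : i ∈ T' ∩ u := Finset.mem_inter.2 ⟨h, hiu⟩
        rw [huT, Finset.mem_filter] at this
        exact this.2
      · intro hai
        have : i ∈ T' ∩ u := by rw [huT, Finset.mem_filter]; exact ⟨h, hai⟩
        exact (Finset.mem_inter.1 this).2
    have hrestrict : ∀ i, (∑ k, w k * x i k) = ∑ k : S, w k * x i k := by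
      intro i
      rw [Finset.sum_coe_sort S (fun k => w k * x i k)]
      symm
      apply Finset.sum_subset (Finset.subset_univ S)
      intro k _ hk
      rw [hwsupp k hk, zero_mul]
    have hzero : ∑ i ∈ T', a i * (∑ k, w k * x i k) = 0 := by
      calc ∑ i ∈ T', a i * (∑ k, w k * x i k)
          = ∑ i : T', g i * (∑ k : S, w k * x i k) := by
            rw [← Finset.sum_coe_sort T' (fun i => a i * (∑ k, w k * x i k))]
            apply Finset.sum_congr rfl
            intro i _
            rw [hrestrict]
            congr 1
            simp [ha]
        _ = ∑ i : T', ∑ k : S, w k * (g i * x i k) := by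
            apply Finset.sum_congr rfl
            intro i _
            rw [Finset.mul_sum]
            apply Finset.sum_congr rfl
            intro k _
            ring
        _ = ∑ k : S, w k * (∑ i : T', g i * x i k) := by
            rw [Finset.sum_comm]
            apply Finset.sum_congr rfl
            intro k _
            rw [Finset.mul_sum]
        _ = 0 := by
            apply Finset.sum_eq_zero
            intro k _
            have := congrFun hgsum k
            simp only [Finset.sum_apply, Pi.smul_apply, smul_eq_mul, Pi.zero_apply, hv] at this
            rw [this, mul_zero]
    have hneg : ∑ i ∈ T', a i * (∑ k, w k * x i k) < ∑ _i ∈ T', (0:ℝ) := by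
      apply Finset.sum_lt_sum
      · intro i hi
        by_cases hai : a i ≤ 0
        · exact mul_nonpos_of_nonpos_of_nonneg hai ((hmem i hi).2 hai)
        · push_neg at hai
          have hd : ∑ k, w k * x i k < 0 := by
            by_contra hd
            push_neg at hd
            exact absurd ((hmem i hi).1 hd) (not_le.2 hai)
          exact (mul_neg_of_pos_of_neg hai hd).le
      · refine ⟨i₀, i₀.2, ?_⟩
        have hai₀ : 0 < a (i₀ : Fin m) := by
          simp only [ha]
          rw [dif_pos i₀.2]
          simpa using hi₀
        have hd : ∑ k, w k * x (i₀ : Fin m) k < 0 := by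
          by_contra hd
          push_neg at hd
          exact absurd ((hmem _ i₀.2).1 hd) (not_le.2 hai₀)
        exact mul_neg_of_pos_of_neg hai₀ hd
    rw [Finset.sum_const_zero] at hneg
    exact absurd hzero hneg.ne
  by_cases hpos : ∃ i, 0 < g0 i
  · exact main g0 hgsum0 hpos
  · push_neg at hpos
    apply main (-g0)
    · have : ∑ i, (-g0) i • v i = -∑ i, g0 i • v i := by
        rw [← Finset.sum_neg_distrib]
        apply Finset.sum_congr rfl
        intro i _
        simp
      rw [this, hgsum0, neg_zero]
    · exact ⟨i₀0, by simpa [neg_pos] using (hpos i₀0).lt_of_ne hi₀0⟩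

lemma count_fixed_support {p m s : ℕ} (x : Fin m → (Fin p → ℝ))
    (S : Finset (Fin p)) (hS : S.card = s) :
    (dichotomies {w : Fin p → ℝ | ∀ k ∉ S, w k = 0} x).ncard
      ≤ ∑ k ∈ Finset.Iic s, m.choose k := by
  classical
  set D := dichotomies {w : Fin p → ℝ | ∀ k ∉ S, w k = 0} x with hD
  have hDfin : D.Finite := Set.toFinite _
  set 𝒜 : Finset (Finset (Fin m)) :=
    hDfin.toFinset.image (fun b => Finset.univ.filter (fun i => b i = true)) with h𝒜def
  have hinj : Function.Injective
      (fun b : Fin m → Bool => Finset.univ.filter (fun i => b i = true)) := by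
    intro b b' heq
    funext i
    have h := Finset.ext_iff.1 heq i
    simp only [Finset.mem_filter, Finset.mem_univ, true_and] at h
    cases hb : b i <;> cases hb' : b' i <;> simp_all
  have hcard : D.ncard = 𝒜.card := by
    rw [Set.ncard_eq_toFinset_card D hDfin, h𝒜def,
      Finset.card_image_of_injective _ hinj]
  have hmemA : ∀ u ∈ 𝒜, ∃ w : Fin p → ℝ, (∀ k ∉ S, w k = 0) ∧
      ∀ i, (i ∈ u ↔ 0 ≤ ∑ k, w k * x i k) := by
    intro u hu
    rw [h𝒜def, Finset.mem_image] at hu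
    obtain ⟨b, hb, rfl⟩ := hu
    rw [Set.Finite.mem_toFinset] at hb
    obtain ⟨w, hwW, hbw⟩ := hb
    refine ⟨w, hwW, fun i => ?_⟩
    simp only [Finset.mem_filter, Finset.mem_univ, true_and, hbw i, decide_eq_true_eq]
  have hvc : 𝒜.vcDim ≤ s := by
    apply Finset.sup_le
    intro T hT
    exact no_shatter x S hS 𝒜 hmemA T (Finset.mem_shatterer.1 hT)
  calc D.ncard = 𝒜.card := hcard
    _ ≤ 𝒜.shatterer.card := Finset.card_le_card_shatterer 𝒜
    _ ≤ ∑ k ∈ Finset.Iic 𝒜.vcDim, (Fintype.card (Fin m)).choose k :=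
        Finset.card_shatterer_le_sum_vcDim
    _ ≤ ∑ k ∈ Finset.Iic s, m.choose k := by
        rw [Fintype.card_fin]
        exact Finset.sum_le_sum_of_subset (Finset.Iic_subset_Iic.2 hvc)

/-- For `1 ≤ s ≤ p`, `m ≥ s`, and any `m` points in ℝ^p, the number of
dichotomies realized by `x ↦ 1(⟨w, x⟩ ≥ 0)` as `w` ranges over the `s`-sparse vectors
is at most `C(p, s)·(e·m/s)^s`, and hence at most `(e·p·m/s)^s`. -/
theorem stmt7 (p s m : ℕ) (hs : 1 ≤ s) (hsp : s ≤ p) (hm : s ≤ m)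
    (x : Fin m → (Fin p → ℝ)) :
    (((dichotomies {w : Fin p → ℝ |
        (Finset.univ.filter fun i => w i ≠ 0).card ≤ s} x).ncard : ℝ)
      ≤ (p.choose s : ℝ) * (Real.exp 1 * m / s) ^ s)
    ∧ (((dichotomies {w : Fin p → ℝ |
        (Finset.univ.filter fun i => w i ≠ 0).card ≤ s} x).ncard : ℝ)
      ≤ (Real.exp 1 * p * m / s) ^ s) := by
  classical
  set P := Finset.powersetCard s (Finset.univ : Finset (Fin p)) with hP
  have hfin : ∀ (W : Set (Fin p → ℝ)), (dichotomies W x).Finite := fun W => Set.toFinite _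
  set Wsp : Set (Fin p → ℝ) := {w : Fin p → ℝ |
      (Finset.univ.filter fun i => w i ≠ 0).card ≤ s} with hWsp
  -- covering step
  have hsub : (hfin Wsp).toFinset ⊆
      P.biUnion (fun S => (hfin {w : Fin p → ℝ | ∀ k ∉ S, w k = 0}).toFinset) := by
    intro b hb
    rw [Set.Finite.mem_toFinset] at hb
    obtain ⟨w, hwW, hbw⟩ := hb
    simp only [hWsp, Set.mem_setOf_eq] at hwW
    obtain ⟨C, hsuppC, _, hCcard⟩ := Finset.exists_subsuperset_card_eq
      (Finset.subset_univ (Finset.univ.filter fun i => w i ≠ 0)) hwW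
      (by simp only [Finset.card_univ, Fintype.card_fin]; omega)
    have hCs : C.card = s := by omega
    rw [Finset.mem_biUnion]
    refine ⟨C, by simp [hP, Finset.mem_powersetCard, hCs], ?_⟩
    rw [Set.Finite.mem_toFinset]
    refine ⟨w, ?_, hbw⟩
    intro k hk
    by_contra hwk
    exact hk (hsuppC (by simp [hwk]))
  have hB : (dichotomies Wsp x).ncard
      ≤ p.choose s * ∑ k ∈ Finset.Iic s, m.choose k := by
    rw [Set.ncard_eq_toFinset_card _ (hfin Wsp)]
    calc (hfin Wsp).toFinset.card
        ≤ (P.biUnion (fun S => (hfin {w : Fin p → ℝ | ∀ k ∉ S, w k = 0}).toFinset)).card :=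
          Finset.card_le_card hsub
      _ ≤ ∑ S ∈ P, (hfin {w : Fin p → ℝ | ∀ k ∉ S, w k = 0}).toFinset.card :=
          Finset.card_biUnion_le
      _ ≤ ∑ _S ∈ P, ∑ k ∈ Finset.Iic s, m.choose k := by
          apply Finset.sum_le_sum
          intro S hSP
          have hScard : S.card = s := (Finset.mem_powersetCard.1 hSP).2
          rw [← Set.ncard_eq_toFinset_card _ (hfin _)]
          exact count_fixed_support x S hScard
      _ = p.choose s * ∑ k ∈ Finset.Iic s, m.choose k := by
          rw [Finset.sum_const, hP, Finset.card_powersetCard, Finset.card_univ,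
            Fintype.card_fin, smul_eq_mul]
  have hnum := sum_choose_le_expBound s m hs hm
  have part1 : ((dichotomies Wsp x).ncard : ℝ)
      ≤ (p.choose s : ℝ) * (Real.exp 1 * m / s) ^ s := by
    calc ((dichotomies Wsp x).ncard : ℝ)
        ≤ ((p.choose s * ∑ k ∈ Finset.Iic s, m.choose k : ℕ) : ℝ) := by exact_mod_cast hB
      _ = (p.choose s : ℝ) * ((∑ k ∈ Finset.Iic s, m.choose k : ℕ) : ℝ) := by push_cast; ring
      _ ≤ (p.choose s : ℝ) * (Real.exp 1 * m / s) ^ s :=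
          mul_le_mul_of_nonneg_left hnum (Nat.cast_nonneg _)
  refine ⟨part1, part1.trans ?_⟩
  have hchoose : (p.choose s : ℝ) ≤ (p : ℝ) ^ s := by
    exact_mod_cast Nat.choose_le_pow p s
  have hpow : (0:ℝ) ≤ (Real.exp 1 * m / s) ^ s := by positivity
  calc (p.choose s : ℝ) * (Real.exp 1 * m / s) ^ s
      ≤ (p : ℝ) ^ s * (Real.exp 1 * m / s) ^ s := mul_le_mul_of_nonneg_right hchoose hpow
    _ = (Real.exp 1 * p * m / s) ^ s := by
        rw [← mul_pow]
        congr 1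
        ring
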